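/- arXiv:2105.09731 — 4 statements merged into one kernel-verified Lean document; each statement's English description precedes it below -/
import Mathlib

section
/- Let k be a field and A = k⟨X⟩ the free associative algebra on a set X, graded by total degree. If a₁, …, aₙ are nonzero homogeneous elements with |a₁| ≤ … ≤ |aₙ| and there exist homogeneous elements b₁, …, bₙ with ∑ aᵢbᵢ = 0 and not all bᵢ = 0, then some aᵢ is a right A-linear combination of the aⱼ with j < i. -/
open Finsupp MonoidAlgebra FreeMonoid

namespace Stmt0Aux

variable {k : Type*} [Field k] {X : Type*}

lemma suffix_append_iff {u w v : List X} (h : u.length ≤ v.length) :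
    u <:+ (w ++ v) ↔ u <:+ v := by
  constructor
  · intro hs
    exact List.suffix_of_suffix_length_le hs (List.suffix_append w v) h
  · rintro ⟨t, rfl⟩
    exact ⟨w ++ t, by rw [List.append_assoc]⟩

open Classical in
/-- strip the word `u` from the right of `w`, as an element of the monoid algebra -/
noncomputable def g (u w : FreeMonoid X) : MonoidAlgebra k (FreeMonoid X) :=
  if u.toList <:+ w.toList then
    MonoidAlgebra.single (FreeMonoid.ofList (w.toList.take (w.length - u.length))) 1
  else 0

lemma g_append (u w v : FreeMonoid X) (h : u.length ≤ v.length) :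
    (g u (w * v) : MonoidAlgebra k (FreeMonoid X)) = MonoidAlgebra.single w 1 * g u v := by
  classical
  have hiff : u.toList <:+ (w * v).toList ↔ u.toList <:+ v.toList := by
    rw [toList_mul]
    exact suffix_append_iff h
  by_cases hs : u.toList <:+ v.toList
  · rw [g, if_pos (hiff.mpr hs), g, if_pos hs, MonoidAlgebra.single_mul_single, mul_one]
    congr 1
    have hlen : (w * v).length - u.length = (toList w).length + (v.length - u.length) := by
      have : (w * v).length = w.length + v.length := length_mul w v
      have hw : (toList w).length = w.length := rfl
      omega
    rw [toList_mul, hlen, List.take_length_add_append, ofList_append, ofList_toList]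
  · rw [g, if_neg (fun hc => hs (hiff.mp hc)), g, if_neg hs, mul_zero]

open Classical in
lemma g_of_length_eq (u v : FreeMonoid X) (h : v.length = u.length) :
    (g u v : MonoidAlgebra k (FreeMonoid X)) = if v = u then 1 else 0 := by
  by_cases hvu : v = u
  · subst hvu
    rw [g, if_pos (List.suffix_refl _), if_pos rfl, Nat.sub_self, List.take_zero]
    exact MonoidAlgebra.one_def.symm
  · rw [if_neg hvu, g]
    by_cases hs : u.toList <:+ v.toList
    · exact absurd (toList.injective (List.IsSuffix.eq_of_length hs h.symm)).symm hvu
    · rw [if_neg hs]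

/-- right transduction by the word `u` -/
noncomputable def phi (u : FreeMonoid X) :
    MonoidAlgebra k (FreeMonoid X) →ₗ[k] MonoidAlgebra k (FreeMonoid X) where
  toFun q := q.coeff.sum fun w c => c • g u w
  map_add' f g := Finsupp.sum_add_index' (fun a => zero_smul k _) (fun a b₁ b₂ => add_smul b₁ b₂ _)
  map_smul' c f := by
    show ((c • f).coeff.sum fun w t => t • g u w) = c • (f.coeff.sum fun w t => t • g u w)
    rw [MonoidAlgebra.coeff_smul, Finsupp.sum_smul_index (fun w => zero_smul k (g u w)), Finsupp.smul_sum]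
    exact Finsupp.sum_congr fun w _ => mul_smul c (f.coeff w) (g u w)

lemma phi_single (u w : FreeMonoid X) (c : k) :
    phi u (MonoidAlgebra.single w c) = c • g u w := by
  show (MonoidAlgebra.single w c).coeff.sum (fun w c => c • g u w) = c • g u w
  exact Finsupp.sum_single_index (zero_smul k _)

lemma sum_single_eq_self (q : MonoidAlgebra k (FreeMonoid X)) :
    (∑ v ∈ q.coeff.support, MonoidAlgebra.single v (q.coeff v)) = q := by
  conv_rhs => rw [← MonoidAlgebra.sum_coeff_single q]
  rfl

lemma phi_mul_single (u : FreeMonoid X) (p : MonoidAlgebra k (FreeMonoid X))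
    (v : FreeMonoid X) (c : k) (hv : u.length ≤ v.length) :
    phi u (p * MonoidAlgebra.single v c) = p * phi u (MonoidAlgebra.single v c) := by
  conv_lhs => rw [← sum_single_eq_self p]
  conv_rhs => rw [← sum_single_eq_self p]
  rw [Finset.sum_mul, map_sum, Finset.sum_mul]
  refine Finset.sum_congr rfl fun w _ => ?_
  rw [MonoidAlgebra.single_mul_single, phi_single, phi_single, g_append u w v hv,
    show MonoidAlgebra.single w (p.coeff w) = (p.coeff w) • MonoidAlgebra.single w 1 by
      rw [MonoidAlgebra.smul_single', mul_one],
    smul_mul_assoc, mul_smul_comm, smul_smul]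

lemma phi_mul (u : FreeMonoid X) (p q : MonoidAlgebra k (FreeMonoid X))
    (hq : ∀ v ∈ q.coeff.support, u.length ≤ FreeMonoid.length v) :
    phi u (p * q) = p * phi u q := by
  conv_lhs => rw [← sum_single_eq_self q]
  conv_rhs => rw [← sum_single_eq_self q]
  rw [Finset.mul_sum, map_sum, map_sum, Finset.mul_sum]
  exact Finset.sum_congr rfl fun v hv => phi_mul_single u p v (q.coeff v) (hq v hv)

lemma phi_of_supported (u : FreeMonoid X) (q : MonoidAlgebra k (FreeMonoid X))
    (hq : ∀ v ∈ q.coeff.support, FreeMonoid.length v = u.length) :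
    phi u q = (q.coeff u) • 1 := by
  classical
  conv_lhs => rw [← sum_single_eq_self q]
  rw [map_sum]
  have hterm : ∀ v ∈ q.coeff.support,
      phi u (MonoidAlgebra.single v (q.coeff v)) = if v = u then (q.coeff u) • 1 else 0 := by
    intro v hv
    rw [phi_single, g_of_length_eq u v (hq v hv), smul_ite, smul_zero]
    by_cases hvu : v = u
    · subst hvu; simp
    · simp [hvu]
  rw [Finset.sum_congr rfl hterm, Finset.sum_ite_eq' q.coeff.support u (fun _ => (q.coeff u) • 1)]
  by_cases hu : u ∈ q.coeff.support
  · rw [if_pos hu]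
  · rw [if_neg hu, Finsupp.notMem_support_iff.1 hu, zero_smul]

/-- degree projection -/
noncomputable def pid (d : ℕ) :
    MonoidAlgebra k (FreeMonoid X) →ₗ[k] MonoidAlgebra k (FreeMonoid X) where
  toFun f := MonoidAlgebra.ofCoeff (f.coeff.filter (fun w => FreeMonoid.length w = d))
  map_add' f g := MonoidAlgebra.ext Finsupp.filter_add
  map_smul' c f := MonoidAlgebra.ext Finsupp.filter_smul

lemma pid_eq_self {d : ℕ} {f : MonoidAlgebra k (FreeMonoid X)}
    (hf : ∀ w ∈ f.coeff.support, FreeMonoid.length w = d) : pid d f = f := by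
  ext w
  show f.coeff.filter (fun w => FreeMonoid.length w = d) w = f.coeff w
  rw [Finsupp.filter_apply]
  by_cases hw : FreeMonoid.length w = d
  · rw [if_pos hw]
  · rw [if_neg hw]
    by_contra hc
    exact hw (hf w (Finsupp.mem_support_iff.2 (fun h0 => hc h0.symm)))

lemma pid_eq_zero {d d' : ℕ} {f : MonoidAlgebra k (FreeMonoid X)}
    (hf : ∀ w ∈ f.coeff.support, FreeMonoid.length w = d') (hdd : d' ≠ d) : pid d f = 0 := by
  ext w
  show f.coeff.filter (fun w => FreeMonoid.length w = d) w = 0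
  rw [Finsupp.filter_apply]
  by_cases hw : FreeMonoid.length w = d
  · rw [if_pos hw]
    by_contra hc
    exact hdd ((hf w (Finsupp.mem_support_iff.2 hc)).symm.trans hw)
  · rw [if_neg hw]

end Stmt0Aux

namespace Stmt0Aux

variable {k : Type*} [Field k] {X : Type*}

lemma e_iota (y : X) :
    FreeAlgebra.equivMonoidAlgebraFreeMonoid (FreeAlgebra.ι k y)
      = MonoidAlgebra.single (FreeMonoid.of y) 1 := by
  simp [FreeAlgebra.equivMonoidAlgebraFreeMonoid]

lemma support_length (p : ℕ) (x : FreeAlgebra k X)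
    (hx : x ∈ (Submodule.span k (Set.range (FreeAlgebra.ι k (X := X)))) ^ p) :
    ∀ w ∈ (FreeAlgebra.equivMonoidAlgebraFreeMonoid x).coeff.support, FreeMonoid.length w = p := by
  classical
  induction p generalizing x with
  | zero =>
    rw [pow_zero] at hx
    obtain ⟨y, rfl⟩ := Submodule.mem_one.1 hx
    intro w hw
    rw [AlgEquiv.commutes, Algebra.algebraMap_eq_smul_one, MonoidAlgebra.one_def,
      MonoidAlgebra.smul_single', mul_one, MonoidAlgebra.coeff_single] at hw
    have := Finsupp.support_single_subset hw
    rw [Finset.mem_singleton] at this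
    subst this
    rfl
  | succ p ih =>
    rw [pow_succ] at hx
    refine Submodule.mul_induction_on hx ?_ ?_
    · intro m hm n hn
      induction hn using Submodule.span_induction with
      | mem z hz =>
        obtain ⟨y, rfl⟩ := hz
        intro w hw
        rw [map_mul, e_iota] at hw
        obtain ⟨w', hw', rfl⟩ := Finset.mem_image.1
          (MonoidAlgebra.support_coeff_mul_single_subset _ 1 (FreeMonoid.of y) hw)
        rw [FreeMonoid.length_mul, ih m hm w' hw', FreeMonoid.length_of]
      | zero =>
        intro w hw
        rw [mul_zero, map_zero] at hw
        simp at hw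
      | add z₁ z₂ hz₁ hz₂ h₁ h₂ =>
        intro w hw
        rw [mul_add, map_add] at hw
        rcases Finset.mem_union.1 (Finsupp.support_add hw) with h | h
        · exact h₁ w h
        · exact h₂ w h
      | smul c z hz h =>
        intro w hw
        rw [mul_smul_comm, map_smul] at hw
        exact h w (Finsupp.support_smul hw)
    · intro x y hx' hy' w hw
      rw [map_add] at hw
      rcases Finset.mem_union.1 (Finsupp.support_add hw) with h | h
      · exact hx' w h
      · exact hy' w h

end Stmt0Aux

/-- In the free associative algebra `A = k⟨X⟩`, graded by total degree
(`M ^ d` is the degree-`d` homogeneous component, where `M` is the span of the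
generators), if nonzero homogeneous elements `a₁, …, aₙ` with nondecreasing degrees
satisfy `∑ aᵢ bᵢ = 0` for homogeneous `bᵢ`, not all zero, then some `aᵢ` is a right
`A`-linear combination of the `aⱼ` with `j < i`. -/
theorem stmt0 (k : Type*) [Field k] (X : Type*) (n : ℕ)
    (M : Submodule k (FreeAlgebra k X))
    (hM : M = Submodule.span k (Set.range (FreeAlgebra.ι k (X := X))))
    (a b : Fin n → FreeAlgebra k X) (da db : Fin n → ℕ)
    (ha : ∀ i, a i ∈ M ^ (da i)) (hane : ∀ i, a i ≠ 0)
    (hmono : Monotone da)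
    (hb : ∀ i, b i ∈ M ^ (db i))
    (hsum : ∑ i, a i * b i = 0)
    (hbne : ∃ i, b i ≠ 0) :
    ∃ i : Fin n, ∃ c : Fin n → FreeAlgebra k X,
      a i = ∑ j ∈ Finset.univ.filter (fun j => j < i), a j * c j := by
  classical
  subst hM
  set e := FreeAlgebra.equivMonoidAlgebraFreeMonoid
    (R := k) (X := X) with he
  have hsuppa : ∀ i, ∀ w ∈ (e (a i)).coeff.support, FreeMonoid.length w = da i :=
    fun i => Stmt0Aux.support_length (da i) (a i) (ha i)
  have hsuppb : ∀ i, ∀ w ∈ (e (b i)).coeff.support, FreeMonoid.length w = db i :=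
    fun i => Stmt0Aux.support_length (db i) (b i) (hb i)
  obtain ⟨i₀, hbi₀⟩ := hbne
  set d := da i₀ + db i₀ with hd
  set S : Finset (Fin n) := Finset.univ.filter (fun i => b i ≠ 0 ∧ da i + db i = d) with hS
  have hi₀S : i₀ ∈ S := by simp [hS, hbi₀, hd]
  have hSne : S.Nonempty := ⟨i₀, hi₀S⟩
  set m := S.max' hSne with hmdef
  have hmS : m ∈ S := S.max'_mem hSne
  have hbm : b m ≠ 0 := (Finset.mem_filter.1 hmS).2.1
  have hdm : da m + db m = d := (Finset.mem_filter.1 hmS).2.2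
  -- the relation in the monoid algebra
  have he0 : ∑ i, e (a i) * e (b i) = 0 := by
    have h := congrArg e hsum
    rw [map_sum, map_zero] at h
    simpa only [map_mul] using h
  have hprod_supp : ∀ i, ∀ w ∈ (e (a i) * e (b i)).coeff.support,
      FreeMonoid.length w = da i + db i := by
    intro i w hw
    obtain ⟨x, hx, y, hy, rfl⟩ := Finset.mem_mul.1 (MonoidAlgebra.support_coeff_mul_subset _ _ hw)
    rw [FreeMonoid.length_mul, hsuppa i x hx, hsuppb i y hy]
  -- project onto degree d
  have hproj : ∑ i ∈ Finset.univ.filter (fun i => da i + db i = d),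
      e (a i) * e (b i) = 0 := by
    have h1 : ∑ i, Stmt0Aux.pid d (e (a i) * e (b i)) = 0 := by
      rw [← map_sum, he0, map_zero]
    have h2 : ∀ i ∈ Finset.univ, Stmt0Aux.pid d (e (a i) * e (b i))
        = if da i + db i = d then e (a i) * e (b i) else 0 := by
      intro i _
      by_cases hdi : da i + db i = d
      · rw [if_pos hdi, Stmt0Aux.pid_eq_self]
        intro w hw
        rw [hprod_supp i w hw, hdi]
      · rw [if_neg hdi, Stmt0Aux.pid_eq_zero (hprod_supp i) hdi]
    rw [Finset.sum_congr rfl h2, ← Finset.sum_filter] at h1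
    exact h1
  have hSsum : ∑ i ∈ S, e (a i) * e (b i) = 0 := by
    have hsub : S ⊆ Finset.univ.filter (fun i => da i + db i = d) := by
      intro i hi
      simp only [hS, Finset.mem_filter] at hi ⊢
      exact ⟨hi.1, hi.2.2⟩
    rw [Finset.sum_subset hsub ?_]
    · exact hproj
    · intro i hi hiS
      have hbz : b i = 0 := by
        by_contra hbz
        exact hiS (by simp only [hS, Finset.mem_filter] at hi ⊢; exact ⟨hi.1, hbz, hi.2⟩)
      rw [hbz, map_zero, mul_zero]
  -- choose the word u
  have hebm : e (b m) ≠ 0 := fun h => hbm (by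
    have := congrArg e.symm h
    rwa [AlgEquiv.symm_apply_apply, map_zero] at this)
  obtain ⟨u, hu⟩ := Finsupp.support_nonempty_iff.2 (MonoidAlgebra.coeff_eq_zero.not.2 hebm)
  have hul : FreeMonoid.length u = db m := hsuppb m u hu
  set lam := (e (b m)).coeff u with hlam
  have hlamne : lam ≠ 0 := Finsupp.mem_support_iff.1 hu
  -- degrees of b's in S are at least db m
  have hdb : ∀ i ∈ S, db m ≤ db i := by
    intro i hi
    have h1 : i ≤ m := S.le_max' i hi
    have h2 : da i ≤ da m := hmono h1
    have h3 : da i + db i = d := (Finset.mem_filter.1 hi).2.2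
    omega
  -- apply phi u
  have hphisum : ∑ i ∈ S, e (a i) * Stmt0Aux.phi u (e (b i)) = 0 := by
    have h := congrArg (Stmt0Aux.phi u) hSsum
    rw [map_sum, map_zero] at h
    rw [← h]
    refine Finset.sum_congr rfl fun i hi => ?_
    rw [Stmt0Aux.phi_mul]
    intro v hv
    rw [hul, hsuppb i v hv]
    exact hdb i hi
  have hphim : Stmt0Aux.phi u (e (b m)) = lam • 1 := by
    rw [hlam]
    exact Stmt0Aux.phi_of_supported u (e (b m))
      (fun v hv => by rw [hsuppb m v hv, hul])
  have hsplit : lam • e (a m) + ∑ i ∈ S.erase m, e (a i) * Stmt0Aux.phi u (e (b i)) = 0 := by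
    rw [← Finset.add_sum_erase S (fun i => e (a i) * Stmt0Aux.phi u (e (b i))) hmS] at hphisum
    rw [hphim, mul_smul_comm, mul_one] at hphisum
    exact hphisum
  have hαm : e (a m) = ∑ i ∈ S.erase m, e (a i) * ((-lam⁻¹) • Stmt0Aux.phi u (e (b i))) := by
    have h1 : lam • e (a m) = -∑ i ∈ S.erase m, e (a i) * Stmt0Aux.phi u (e (b i)) :=
      eq_neg_of_add_eq_zero_left hsplit
    have h2 : e (a m) = (-lam⁻¹) • ∑ i ∈ S.erase m, e (a i) * Stmt0Aux.phi u (e (b i)) := by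
      calc e (a m) = lam⁻¹ • (lam • e (a m)) := by
            rw [smul_smul, inv_mul_cancel₀ hlamne, one_smul]
        _ = lam⁻¹ • (-∑ i ∈ S.erase m, e (a i) * Stmt0Aux.phi u (e (b i))) := by rw [h1]
        _ = (-lam⁻¹) • ∑ i ∈ S.erase m, e (a i) * Stmt0Aux.phi u (e (b i)) := by
            rw [smul_neg, ← neg_smul]
    rw [h2, Finset.smul_sum]
    exact Finset.sum_congr rfl fun i _ => (mul_smul_comm _ _ _).symm
  refine ⟨m, fun j => if j ∈ S.erase m then e.symm ((-lam⁻¹) • Stmt0Aux.phi u (e (b j)))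
    else 0, ?_⟩
  have hsub2 : S.erase m ⊆ Finset.univ.filter (fun j => j < m) := by
    intro j hj
    simp only [Finset.mem_filter, Finset.mem_univ, true_and]
    exact lt_of_le_of_ne (S.le_max' j (Finset.mem_of_mem_erase hj)) (Finset.ne_of_mem_erase hj)
  rw [← Finset.sum_subset hsub2 ?_]
  · apply e.injective
    rw [map_sum, hαm]
    refine Finset.sum_congr rfl fun j hj => ?_
    rw [map_mul]
    simp only [if_pos hj, AlgEquiv.apply_symm_apply]
  · intro j _ hj
    simp only [if_neg hj, mul_zero]
end

section
/- Let L be a free Lie algebra over a field k of characteristic 0, freely generated by a set F, graded so that each element of F is homogeneous of positive degree. Then any set X of homogeneous elements of L whose images form a basis of the abelianization L/[L,L] freely generates L. -/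
open scoped TensorProduct

noncomputable section Stmt7Aux

namespace Stmt7

variable {k : Type*} [Field k]

instance lieAlgK (N : Type*) [LieRing N] [LieAlgebra k N] :
    LieAlgebra k (Polynomial k ⊗[k] N) where
  lie_smul c x y := by
    rw [← algebraMap_smul (Polynomial k) c y,
      lie_smul (algebraMap k (Polynomial k) c) x y, algebraMap_smul]

/-- coefficient extraction -/
def Eproj (N : Type*) [AddCommGroup N] [Module k N] (d : ℕ) :
    Polynomial k ⊗[k] N →ₗ[k] N :=
  (TensorProduct.lid k N).toLinearMap ∘ₗ
    (TensorProduct.map (Polynomial.lcoeff k d) LinearMap.id)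

@[simp] theorem Eproj_tmul (N : Type*) [AddCommGroup N] [Module k N] (d : ℕ)
    (p : Polynomial k) (m : N) : Eproj N d (p ⊗ₜ m) = p.coeff d • m := by
  simp [Eproj]

/-- base change of a Lie hom along `Polynomial k` -/
def tmap {N N' : Type*} [LieRing N] [LieAlgebra k N] [LieRing N'] [LieAlgebra k N']
    (g : N →ₗ⁅k⁆ N') :
    (Polynomial k ⊗[k] N) →ₗ⁅k⁆ (Polynomial k ⊗[k] N') where
  toLinearMap := TensorProduct.map LinearMap.id g.toLinearMap
  map_lie' {x y} := by
    induction x using TensorProduct.induction_on with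
    | zero => simp
    | tmul p a =>
      induction y using TensorProduct.induction_on with
      | zero => simp
      | tmul q b => simp [LieAlgebra.ExtendScalars.bracket_tmul]
      | add u v hu hv => simp_all [lie_add]
    | add u v hu hv => simp_all [add_lie]

@[simp] theorem tmap_tmul {N N' : Type*} [LieRing N] [LieAlgebra k N] [LieRing N']
    [LieAlgebra k N'] (g : N →ₗ⁅k⁆ N') (p : Polynomial k) (m : N) :
    tmap g (p ⊗ₜ m) = p ⊗ₜ g m := rfl

section TLie
variable {N : Type*} [LieRing N] [LieAlgebra k N]

theorem tlie_add (x u v : Polynomial k ⊗[k] N) : ⁅x, u + v⁆ = ⁅x, u⁆ + ⁅x, v⁆ := lie_add x u v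
theorem tadd_lie (u v x : Polynomial k ⊗[k] N) : ⁅u + v, x⁆ = ⁅u, x⁆ + ⁅v, x⁆ := add_lie u v x
theorem tzero_lie (x : Polynomial k ⊗[k] N) : ⁅(0 : Polynomial k ⊗[k] N), x⁆ = 0 := zero_lie x
theorem tlie_zero (x : Polynomial k ⊗[k] N) : ⁅x, (0 : Polynomial k ⊗[k] N)⁆ = 0 := lie_zero x

end TLie

theorem free_gen {Y : Type*} (S : LieSubalgebra k (FreeLieAlgebra k Y))
    (h : ∀ y, FreeLieAlgebra.of k y ∈ S) (m : FreeLieAlgebra k Y) : m ∈ S := by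
  let g : FreeLieAlgebra k Y →ₗ⁅k⁆ S :=
    FreeLieAlgebra.lift k fun y => (⟨FreeLieAlgebra.of k y, h y⟩ : S)
  have key : S.incl.comp g = LieHom.id := by
    apply FreeLieAlgebra.hom_ext
    intro y
    simp [g, FreeLieAlgebra.lift_of_apply, LieSubalgebra.coe_incl]
  have : (S.incl.comp g) m = m := by rw [key]; rfl
  rw [← this]
  exact (g m).2

theorem hom_ext_of_surj {Y L N : Type*} [LieRing L] [LieAlgebra k L]
    [LieRing N] [LieAlgebra k N]
    (pi : FreeLieAlgebra k Y →ₗ⁅k⁆ L) (hpi : Function.Surjective pi)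
    (g h : L →ₗ⁅k⁆ N)
    (H : ∀ y, g (pi (FreeLieAlgebra.of k y)) = h (pi (FreeLieAlgebra.of k y))) :
    ∀ l, g l = h l := by
  have hcomp : g.comp pi = h.comp pi := FreeLieAlgebra.hom_ext H
  intro l
  obtain ⟨m, rfl⟩ := hpi l
  exact DFunLike.congr_fun hcomp m

/-- lower central series as submodules -/
def lcs (k M : Type*) [Field k] [LieRing M] [LieAlgebra k M] : ℕ → Submodule k M
  | 0 => ⊤
  | n + 1 => Submodule.span k {z | ∃ a : M, ∃ b ∈ lcs k M n, ⁅a, b⁆ = z}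

section Lcs

variable {M : Type*} [LieRing M] [LieAlgebra k M]

theorem lcs_succ (n : ℕ) :
    lcs k M (n + 1) = Submodule.span k {z | ∃ a : M, ∃ b ∈ lcs k M n, ⁅a, b⁆ = z} := rfl

theorem lie_mem_lcs {b : M} {n : ℕ} (a : M) (hb : b ∈ lcs k M n) :
    ⁅a, b⁆ ∈ lcs k M (n + 1) := by
  rw [lcs_succ]; exact Submodule.subset_span ⟨a, b, hb, rfl⟩

theorem lcs_succ_le (n : ℕ) : lcs k M (n + 1) ≤ lcs k M n := by
  induction n with
  | zero => exact le_top
  | succ n ih =>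
    rw [lcs_succ (n + 1)]
    apply Submodule.span_le.2
    rintro z ⟨a, b, hb, rfl⟩
    exact lie_mem_lcs a (ih hb)

theorem lcs_bracket : ∀ (i j : ℕ) (a b : M), a ∈ lcs k M i → b ∈ lcs k M j →
    ⁅a, b⁆ ∈ lcs k M (i + j + 1) := by
  intro i
  induction i with
  | zero => intro j a b _ hb; simpa using lie_mem_lcs a hb
  | succ i ih =>
    intro j a b ha hb
    rw [lcs_succ] at ha
    induction ha using Submodule.span_induction with
    | mem z hz =>
      obtain ⟨u, v, hv, rfl⟩ := hz
      rw [lie_lie]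
      refine sub_mem ?_ ?_
      · have h1 : ⁅v, b⁆ ∈ lcs k M (i + j + 1) := ih j v b hv hb
        have := lie_mem_lcs (k := k) u h1
        convert this using 2; omega
      · have h1 : ⁅u, b⁆ ∈ lcs k M (j + 1) := lie_mem_lcs u hb
        have := ih (j + 1) v _ hv h1
        convert this using 2; omega
    | zero => simp
    | add u v _ _ hu hv => rw [add_lie]; exact add_mem hu hv
    | smul c u _ hu => rw [smul_lie]; exact Submodule.smul_mem _ c hu

end Lcs

section FreeGraded

variable (k) {Y : Type*} (w : Y → ℕ)

/-- grading coaction on the free Lie algebra, generator `y` in degree `w y` -/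
def beta : FreeLieAlgebra k Y →ₗ⁅k⁆ Polynomial k ⊗[k] FreeLieAlgebra k Y :=
  FreeLieAlgebra.lift k fun y => (Polynomial.X ^ (w y)) ⊗ₜ FreeLieAlgebra.of k y

/-- degree-`d` homogeneous component -/
def Md (d : ℕ) : Submodule k (FreeLieAlgebra k Y) :=
  LinearMap.ker ((beta k w).toLinearMap -
    TensorProduct.mk k (Polynomial k) (FreeLieAlgebra k Y) (Polynomial.X ^ d))

theorem mem_Md {d : ℕ} {m : FreeLieAlgebra k Y} :
    m ∈ Md k w d ↔ beta k w m = (Polynomial.X ^ d) ⊗ₜ m := by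
  rw [Md, LinearMap.mem_ker, LinearMap.sub_apply, sub_eq_zero]
  rfl

theorem of_mem_Md (y : Y) : FreeLieAlgebra.of k y ∈ Md k w (w y) := by
  rw [mem_Md, beta, FreeLieAlgebra.lift_of_apply]

theorem bracket_Md {i j : ℕ} {a b : FreeLieAlgebra k Y} (ha : a ∈ Md k w i)
    (hb : b ∈ Md k w j) : ⁅a, b⁆ ∈ Md k w (i + j) := by
  rw [mem_Md] at ha hb ⊢
  rw [LieHom.map_lie, ha, hb, LieAlgebra.ExtendScalars.bracket_tmul, ← pow_add]

/-- degree-`d` coefficient projection -/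
def Ew (d : ℕ) : FreeLieAlgebra k Y →ₗ[k] FreeLieAlgebra k Y :=
  (Eproj (FreeLieAlgebra k Y) d) ∘ₗ (beta k w).toLinearMap

theorem Ew_of_mem {d e : ℕ} {m : FreeLieAlgebra k Y} (hm : m ∈ Md k w e) :
    Ew k w d m = if d = e then m else 0 := by
  rw [mem_Md] at hm
  rw [Ew, LinearMap.comp_apply, LieHom.coe_toLinearMap, hm, Eproj_tmul,
    Polynomial.coeff_X_pow]
  split <;> simp_all

/-- span of components of degree at least `n` -/
def Psup (n : ℕ) : Submodule k (FreeLieAlgebra k Y) :=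
  ⨆ d : {d : ℕ // n ≤ d}, Md k w d.1

theorem Md_le_Psup {n d : ℕ} (h : n ≤ d) : Md k w d ≤ Psup k w n :=
  le_iSup (fun d : {d : ℕ // n ≤ d} => Md k w d.1) ⟨d, h⟩

theorem Psup_anti {n n' : ℕ} (h : n ≤ n') : Psup k w n' ≤ Psup k w n :=
  iSup_le fun d => Md_le_Psup k w (le_trans h d.2)

theorem Psup_bracket {i j : ℕ} {a b : FreeLieAlgebra k Y}
    (ha : a ∈ Psup k w i) (hb : b ∈ Psup k w j) : ⁅a, b⁆ ∈ Psup k w (i + j) := by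
  have main : ∀ b', b' ∈ Psup k w j → ⁅a, b'⁆ ∈ Psup k w (i + j) := by
    refine Submodule.iSup_induction (x := a)
      (motive := fun a => ∀ b', b' ∈ Psup k w j → ⁅a, b'⁆ ∈ Psup k w (i + j)) _ ha ?_ ?_ ?_
    · intro d x hx b' hb'
      refine Submodule.iSup_induction (x := b')
        (motive := fun b' => ⁅x, b'⁆ ∈ Psup k w (i + j)) _ hb' ?_ ?_ ?_
      · intro e y hy
        exact Md_le_Psup k w (Nat.add_le_add d.2 e.2) (bracket_Md k w hx hy)
      · simp
      · intro u v hu hv; rw [lie_add]; exact add_mem hu hv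
    · intro b' _; simp
    · intro x y hx hy b' hb'
      rw [add_lie]; exact add_mem (hx b' hb') (hy b' hb')
  exact main b hb

theorem Psup_one_eq_top (hw : ∀ y, 1 ≤ w y) : Psup k w 1 = ⊤ := by
  refine Submodule.eq_top_iff'.2 fun m => ?_
  let S : LieSubalgebra k (FreeLieAlgebra k Y) :=
    { toSubmodule := Psup k w 1
      lie_mem' := fun {a b} ha hb =>
        Psup_anti k w (by norm_num) (Psup_bracket k w ha hb) }
  exact free_gen S (fun y => Md_le_Psup k w (hw y) (of_mem_Md k w y)) m

theorem Md_inf_Psup {d : ℕ} {m : FreeLieAlgebra k Y}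
    (h1 : m ∈ Md k w d) (h2 : m ∈ Psup k w (d + 1)) : m = 0 := by
  have e1 : Ew k w d m = m := by rw [Ew_of_mem k w h1, if_pos rfl]
  have e2 : Ew k w d m = 0 := by
    refine Submodule.iSup_induction (x := m) (motive := fun m => Ew k w d m = 0) _ h2 ?_ ?_ ?_
    · intro e x hx
      rw [Ew_of_mem k w hx, if_neg]
      have he := e.2
      omega
    · simp
    · intro u v hu hv; rw [map_add, hu, hv, add_zero]
  rw [← e1, e2]

theorem theta_inj (hw : ∀ y, 1 ≤ w y)
    (θ : FreeLieAlgebra k Y →ₗ⁅k⁆ FreeLieAlgebra k Y)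
    (hθ1 : ∀ (d : ℕ) (m : FreeLieAlgebra k Y), m ∈ Md k w d → θ m ∈ Md k w d)
    (hθ2 : ∀ m, θ m - m ∈ lcs k (FreeLieAlgebra k Y) 1) :
    Function.Injective θ := by
  classical
  -- θ preserves the lower central series
  have hθlcs : ∀ n, ∀ m ∈ lcs k (FreeLieAlgebra k Y) n, θ m ∈ lcs k (FreeLieAlgebra k Y) n := by
    intro n
    induction n with
    | zero => intro m _; exact Submodule.mem_top
    | succ n ih =>
      intro m hm
      rw [lcs_succ] at hm
      induction hm using Submodule.span_induction with
      | mem z hz =>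
        obtain ⟨a, b, hb, rfl⟩ := hz
        rw [LieHom.map_lie]
        exact lie_mem_lcs _ (ih b hb)
      | zero => simp
      | add u v _ _ hu hv => rw [map_add]; exact add_mem hu hv
      | smul c u _ hu => rw [map_smul]; exact Submodule.smul_mem _ c hu
  -- θ - id increases the lower central series
  have hnu : ∀ n, ∀ m ∈ lcs k (FreeLieAlgebra k Y) n,
      θ m - m ∈ lcs k (FreeLieAlgebra k Y) (n + 1) := by
    intro n
    induction n with
    | zero => intro m _; exact hθ2 m
    | succ n ih =>
      intro m hm
      rw [lcs_succ] at hm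
      induction hm using Submodule.span_induction with
      | mem z hz =>
        obtain ⟨a, b, hb, rfl⟩ := hz
        have key : θ ⁅a, b⁆ - ⁅a, b⁆ = ⁅θ a - a, θ b⁆ + ⁅a, θ b - b⁆ := by
          rw [LieHom.map_lie, sub_lie, lie_sub]
          abel
        rw [key]
        refine add_mem ?_ ?_
        · have h1 : θ a - a ∈ lcs k (FreeLieAlgebra k Y) 1 := hθ2 a
          have h2 : θ b ∈ lcs k (FreeLieAlgebra k Y) n := hθlcs n b hb
          have := lcs_bracket 1 n _ _ h1 h2
          convert this using 2
          omega
        · exact lie_mem_lcs a (ih b hb)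
      | zero => simp
      | add u v _ _ hu hv =>
        have h3 : θ (u + v) - (u + v) = (θ u - u) + (θ v - v) := by
          rw [map_add]; abel
        rw [h3]; exact add_mem hu hv
      | smul c u _ hu =>
        have h3 : θ (c • u) - c • u = c • (θ u - u) := by
          rw [map_smul, smul_sub]
        rw [h3]; exact Submodule.smul_mem _ c hu
  -- kernel elements lie in every term of the lcs
  have hker : ∀ m, θ m = 0 → ∀ n, m ∈ lcs k (FreeLieAlgebra k Y) n := by
    intro m hm n
    induction n with
    | zero => exact Submodule.mem_top
    | succ n ih =>
      have := hnu n m ih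
      rw [hm, zero_sub] at this
      exact neg_mem_iff.1 this
  -- lcs is contained in Psup
  have hlcsP : ∀ n, lcs k (FreeLieAlgebra k Y) n ≤ Psup k w n := by
    intro n
    induction n with
    | zero =>
      exact le_trans (le_of_eq (Psup_one_eq_top k w hw).symm) (Psup_anti k w (Nat.zero_le 1))
    | succ n ih =>
      rw [lcs_succ]
      apply Submodule.span_le.2
      rintro z ⟨a, b, hb, rfl⟩
      have ha : a ∈ Psup k w 1 := by
        rw [Psup_one_eq_top k w hw]; exact Submodule.mem_top
      have := Psup_bracket k w ha (ih hb)
      rwa [Nat.add_comm 1 n] at this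
  -- injectivity on each component
  have hinjMd : ∀ (d : ℕ) (m : FreeLieAlgebra k Y), m ∈ Md k w d → θ m = 0 → m = 0 := by
    intro d m hm h0
    exact Md_inf_Psup k w hm (hlcsP (d + 1) (hker m h0 (d + 1)))
  -- global injectivity
  suffices key : ∀ m, θ m = 0 → m = 0 by
    intro m1 m2 h12
    have hsub : θ (m1 - m2) = 0 := by
      have h3 := map_sub θ.toLinearMap m1 m2
      simp only [LieHom.coe_toLinearMap] at h3
      rw [h3, h12, sub_self]
    exact sub_eq_zero.1 (key _ hsub)
  intro m hm0
  have hmem : m ∈ ⨆ d : ℕ, Md k w d := by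
    have h1 : m ∈ Psup k w 1 := by rw [Psup_one_eq_top k w hw]; exact Submodule.mem_top
    exact (iSup_le fun d : {d : ℕ // 1 ≤ d} => le_iSup (fun d : ℕ => Md k w d) d.1) h1
  rw [Submodule.mem_iSup_iff_exists_dfinsupp'] at hmem
  obtain ⟨f, hf⟩ := hmem
  have hcomp : ∀ d0 : ℕ, θ (f d0) = 0 := by
    intro d0
    have h2 : Ew k w d0 (θ m) = θ (f d0) := by
      have hθsum : θ (∑ i ∈ f.support, ((f i : FreeLieAlgebra k Y))) =
          ∑ i ∈ f.support, θ (f i) := by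
        have h0 := map_sum (θ.toLinearMap) (fun i => ((f i : FreeLieAlgebra k Y))) f.support
        simpa only [LieHom.coe_toLinearMap] using h0
      rw [← hf, DFinsupp.sum, hθsum, map_sum]
      rw [Finset.sum_eq_single d0]
      · rw [Ew_of_mem k w (hθ1 d0 _ (f d0).2), if_pos rfl]
      · intro b _ hb
        rw [Ew_of_mem k w (hθ1 b _ (f b).2), if_neg (Ne.symm hb)]
      · intro hd0
        rw [DFinsupp.notMem_support_iff.1 hd0]
        simp
    rw [hm0, map_zero] at h2
    exact h2.symm
  have hzero : ∀ d0 : ℕ, (f d0 : FreeLieAlgebra k Y) = 0 := fun d0 =>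
    hinjMd d0 _ (f d0).2 (hcomp d0)
  rw [← hf, DFinsupp.sum]
  exact Finset.sum_eq_zero fun d _ => hzero d

end FreeGraded

section Lside

variable (k) {L : Type*} [LieRing L] [LieAlgebra k L]
variable (G : ℕ → Submodule k L) [DirectSum.Decomposition G]

/-- projection onto the degree `d` component -/
def prL (d : ℕ) : L →ₗ[k] L :=
  (G d).subtype ∘ₗ (DirectSum.component k ℕ (fun i => ↥(G i)) d) ∘ₗ
    (DirectSum.decomposeLinearEquiv G).toLinearMap

theorem prL_apply (d : ℕ) (l : L) : prL k G d l = (DirectSum.decompose G l d : L) := rfl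

theorem prL_of_mem_same {d : ℕ} {l : L} (hl : l ∈ G d) : prL k G d l = l := by
  rw [prL_apply, DirectSum.decompose_of_mem_same G hl]

theorem prL_of_mem_ne {d e : ℕ} {l : L} (hl : l ∈ G e) (h : e ≠ d) : prL k G d l = 0 := by
  rw [prL_apply, DirectSum.decompose_of_mem_ne G hl h]

/-- linear coaction on `L` recording degrees -/
def betaL0 : L →ₗ[k] Polynomial k ⊗[k] L :=
  (DirectSum.toModule k ℕ _ fun d =>
      (TensorProduct.mk k (Polynomial k) L (Polynomial.X ^ d)).comp (G d).subtype) ∘ₗ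
    (DirectSum.decomposeLinearEquiv G).toLinearMap

theorem betaL0_of_mem {d : ℕ} {l : L} (hl : l ∈ G d) :
    betaL0 k G l = (Polynomial.X ^ d) ⊗ₜ l := by
  rw [betaL0, LinearMap.comp_apply, LinearEquiv.coe_toLinearMap,
    DirectSum.decomposeLinearEquiv_apply, DirectSum.decompose_of_mem G hl,
    ← DirectSum.lof_eq_of k, DirectSum.toModule_lof]
  rfl

/-- the coaction as a Lie algebra hom, given bracket compatibility of the grading -/
def betaL (hbr : ∀ (i j : ℕ) (x y : L), x ∈ G i → y ∈ G j → ⁅x, y⁆ ∈ G (i + j)) :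
    L →ₗ⁅k⁆ Polynomial k ⊗[k] L :=
  { betaL0 k G with
    map_lie' := by
      intro x y
      have main : ∀ x y : L, betaL0 k G ⁅x, y⁆ = ⁅betaL0 k G x, betaL0 k G y⁆ := by
        intro x
        induction x using DirectSum.Decomposition.inductionOn G with
        | zero => intro y; rw [zero_lie, map_zero, tzero_lie]
        | homogeneous x' =>
          intro y
          induction y using DirectSum.Decomposition.inductionOn G with
          | zero => rw [lie_zero, map_zero, tlie_zero]
          | homogeneous y' =>
            rw [betaL0_of_mem k G x'.2, betaL0_of_mem k G y'.2,
              betaL0_of_mem k G (hbr _ _ _ _ x'.2 y'.2),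
              LieAlgebra.ExtendScalars.bracket_tmul, ← pow_add]
          | add a b ha hb =>
            rw [lie_add, map_add, ha, hb, map_add, tlie_add]
        | add a b ha hb =>
          intro y
          rw [add_lie, map_add, ha y, hb y, map_add, tadd_lie]
      exact main x y }

theorem betaL_of_mem (hbr : ∀ (i j : ℕ) (x y : L), x ∈ G i → y ∈ G j → ⁅x, y⁆ ∈ G (i + j))
    {d : ℕ} {l : L} (hl : l ∈ G d) :
    betaL k G hbr l = (Polynomial.X ^ d) ⊗ₜ l := betaL0_of_mem k G hl

theorem Eproj_betaL0 (e : ℕ) (l : L) : Eproj L e (betaL0 k G l) = prL k G e l := by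
  induction l using DirectSum.Decomposition.inductionOn G with
  | zero => simp
  | @homogeneous i x' =>
    rw [betaL0_of_mem k G x'.2, Eproj_tmul, Polynomial.coeff_X_pow]
    by_cases he : e = i
    · rw [prL_of_mem_same k G (he ▸ x'.2), if_pos he, one_smul]
    · rw [prL_of_mem_ne k G x'.2 (Ne.symm he), if_neg he, zero_smul]
  | add a b ha hb => rw [map_add, map_add, map_add, ha, hb]

/-- If the coaction takes the pure value `X ^ d ⊗ l`, then `l` is homogeneous of degree `d`. -/
theorem mem_of_betaL0_eq {d : ℕ} {l : L}
    (h : betaL0 k G l = (Polynomial.X ^ d) ⊗ₜ l) : l ∈ G d := by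
  classical
  have hne : ∀ e : ℕ, e ≠ d → prL k G e l = 0 := by
    intro e he
    rw [← Eproj_betaL0 k G e l, h, Eproj_tmul, Polynomial.coeff_X_pow, if_neg he, zero_smul]
  have hsum := DirectSum.sum_support_decompose G l
  have hsupp : l = (DirectSum.decompose G l d : L) := by
    conv_lhs => rw [← hsum]
    refine Finset.sum_eq_single d (fun b _ hb => ?_) (fun hd => ?_)
    · have hb0 := hne b hb
      rw [prL_apply] at hb0
      exact hb0
    · rw [DFinsupp.notMem_support_iff.1 hd]
      rfl
  rw [hsupp]
  exact (DirectSum.decompose G l d).2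

end Lside

end Stmt7

end Stmt7Aux

/-- Let `L` be a Lie algebra over a field `k` of characteristic `0`,
graded by positive degrees (`G d`, with `G 0 = ⊥`, a vector-space decomposition
compatible with the bracket), and freely generated by a set `F` of homogeneous
elements of positive degree (i.e. the canonical map `FreeLieAlgebra k F → L` is
bijective).  Then any set `X` of homogeneous elements whose images form a basis of
the abelianization `L/[L,L]` freely generates `L`. -/
theorem stmt7 (k : Type*) [Field k] [CharZero k]
    (L : Type*) [LieRing L] [LieAlgebra k L]
    (G : ℕ → Submodule k L) (hdec : DirectSum.Decomposition G)
    (hbracket : ∀ (i j : ℕ) (x y : L), x ∈ G i → y ∈ G j → ⁅x, y⁆ ∈ G (i + j))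
    (hG0 : G 0 = ⊥)
    (F : Set L)
    (hFhom : ∀ x ∈ F, ∃ d ≥ 1, x ∈ G d)
    (hFfree : Function.Bijective (FreeLieAlgebra.lift k (fun x : F => (x : L))))
    (D : Submodule k L) (hD : D = Submodule.span k {z : L | ∃ a b : L, ⁅a, b⁆ = z})
    (X : Set L)
    (hXhom : ∀ x ∈ X, ∃ d ≥ 1, x ∈ G d)
    (hXind : LinearIndependent k fun x : X => D.mkQ (x : L))
    (hXspan : Submodule.span k (D.mkQ '' X) = ⊤) :
    Function.Bijective (FreeLieAlgebra.lift k (fun x : X => (x : L))) := by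
  classical
  haveI := hdec
  open Stmt7 FreeLieAlgebra in
  set φ : FreeLieAlgebra k ↥X →ₗ⁅k⁆ L := FreeLieAlgebra.lift k (fun x : X => (x : L)) with hφdef
  have hφof : ∀ x : X, φ (FreeLieAlgebra.of k x) = (x : L) := fun x =>
    FreeLieAlgebra.lift_of_apply _ _
  -- weight function on X
  choose w hw1 hw2 using fun x : X => hXhom x.1 x.2
  -- splitting of any element along span X + D
  have hsplit : ∀ l : L, ∃ u ∈ Submodule.span k X, l - u ∈ D := by
    intro l
    have h1 : Submodule.map D.mkQ (Submodule.span k X) = ⊤ := by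
      rw [Submodule.map_span, hXspan]
    have h2 : D.mkQ l ∈ Submodule.map D.mkQ (Submodule.span k X) := by
      rw [h1]; trivial
    obtain ⟨u, hu, huq⟩ := h2
    refine ⟨u, hu, ?_⟩
    have : u - l ∈ D := (Submodule.Quotient.eq D).1 huq
    have h3 : l - u = -(u - l) := by abel
    rw [h3]
    exact neg_mem this
  -- surjectivity of φ
  have hGle : ∀ d : ℕ, ∀ l ∈ G d, l ∈ φ.range := by
    intro d
    induction d using Nat.strong_induction_on with
    | _ d IH =>
      intro l hl
      rcases Nat.eq_zero_or_pos d with hd0 | hdpos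
      · subst hd0
        rw [hG0, Submodule.mem_bot] at hl
        subst hl
        exact (φ.range : LieSubalgebra k L).zero_mem'
      · obtain ⟨u, hu, hv⟩ := hsplit l
        have hlu : l = Stmt7.prL k G d u + Stmt7.prL k G d (l - u) := by
          have e1 : l = Stmt7.prL k G d l := (Stmt7.prL_of_mem_same k G hl).symm
          have e2 : Stmt7.prL k G d l =
              Stmt7.prL k G d u + Stmt7.prL k G d (l - u) := by
            rw [← map_add]
            congr 1
            abel
          rw [← e2, ← e1]
        have hpiece1 : ∀ u' ∈ Submodule.span k X, Stmt7.prL k G d u' ∈ φ.range.toSubmodule := by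
          intro u' hu'
          induction hu' using Submodule.span_induction with
          | mem x hx =>
            by_cases hxd : w ⟨x, hx⟩ = d
            · rw [Stmt7.prL_of_mem_same k G (hxd ▸ hw2 ⟨x, hx⟩)]
              exact ⟨FreeLieAlgebra.of k ⟨x, hx⟩, hφof ⟨x, hx⟩⟩
            · rw [Stmt7.prL_of_mem_ne k G (hw2 ⟨x, hx⟩) hxd]
              exact Submodule.zero_mem _
          | zero => rw [map_zero]; exact Submodule.zero_mem _
          | add a b _ _ ha hb => rw [map_add]; exact add_mem ha hb
          | smul c a _ ha => rw [map_smul]; exact Submodule.smul_mem _ c ha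
        have hbrkt : ∀ a b : L, Stmt7.prL k G d ⁅a, b⁆ ∈ φ.range.toSubmodule := by
          intro a
          induction a using DirectSum.Decomposition.inductionOn G with
          | zero => intro b; rw [zero_lie, map_zero]; exact Submodule.zero_mem _
          | @homogeneous i a' =>
            intro b
            induction b using DirectSum.Decomposition.inductionOn G with
            | zero => rw [lie_zero, map_zero]; exact Submodule.zero_mem _
            | @homogeneous j b' =>
              have hmem : ⁅(a' : L), (b' : L)⁆ ∈ G (i + j) := hbracket i j _ _ a'.2 b'.2
              by_cases hij : i + j = d
              · rw [Stmt7.prL_of_mem_same k G (hij ▸ hmem)]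
                rcases Nat.eq_zero_or_pos i with hi0 | hipos
                · have hab : (a' : L) = 0 := by
                    rw [← Submodule.mem_bot (R := k), ← hG0, ← hi0]; exact a'.2
                  rw [hab, zero_lie]; exact Submodule.zero_mem _
                rcases Nat.eq_zero_or_pos j with hj0 | hjpos
                · have hab : (b' : L) = 0 := by
                    rw [← Submodule.mem_bot (R := k), ← hG0, ← hj0]; exact b'.2
                  rw [hab, lie_zero]; exact Submodule.zero_mem _
                have hia : (a' : L) ∈ φ.range := IH i (by omega) _ a'.2
                have hjb : (b' : L) ∈ φ.range := IH j (by omega) _ b'.2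
                exact (φ.range : LieSubalgebra k L).lie_mem' hia hjb
              · rw [Stmt7.prL_of_mem_ne k G hmem hij]
                exact Submodule.zero_mem _
            | add b1 b2 hb1 hb2 =>
              rw [lie_add, map_add]; exact add_mem hb1 hb2
          | add a1 a2 ha1 ha2 =>
            intro b
            rw [add_lie, map_add]; exact add_mem (ha1 b) (ha2 b)
        have hpiece2 : ∀ v' ∈ D, Stmt7.prL k G d v' ∈ φ.range.toSubmodule := by
          intro v' hv'
          rw [hD] at hv'
          induction hv' using Submodule.span_induction with
          | mem z hz => obtain ⟨a, b, rfl⟩ := hz; exact hbrkt a b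
          | zero => rw [map_zero]; exact Submodule.zero_mem _
          | add a b _ _ ha hb => rw [map_add]; exact add_mem ha hb
          | smul c a _ ha => rw [map_smul]; exact Submodule.smul_mem _ c ha
        rw [hlu]
        exact add_mem (hpiece1 u hu) (hpiece2 _ hv)
  have hsurj : Function.Surjective φ := by
    intro l
    have hmem : l ∈ φ.range.toSubmodule := by
      rw [← DirectSum.sum_support_decompose G l]
      exact Submodule.sum_mem _ fun e _ => hGle e _ (DirectSum.decompose G l e).2
    exact hmem
  -- φ is graded
  have hbetaφ0 : (Stmt7.betaL k G hbracket).comp φ = (Stmt7.tmap φ).comp (Stmt7.beta k w) := by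
    apply FreeLieAlgebra.hom_ext
    intro x
    rw [LieHom.comp_apply, LieHom.comp_apply, hφof x,
      Stmt7.betaL_of_mem k G hbracket (hw2 x),
      (Stmt7.mem_Md k w).1 (Stmt7.of_mem_Md k w x), Stmt7.tmap_tmul, hφof x]
  have hbetaφ : ∀ m, Stmt7.betaL k G hbracket (φ m) = Stmt7.tmap φ (Stmt7.beta k w m) := by
    intro m
    have h0 := DFunLike.congr_fun hbetaφ0 m
    rwa [LieHom.comp_apply, LieHom.comp_apply] at h0
  have hφMd : ∀ d, ∀ m ∈ Stmt7.Md k w d, φ m ∈ G d := by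
    intro d m hm
    apply Stmt7.mem_of_betaL0_eq k G
    have h0 := hbetaφ m
    rw [(Stmt7.mem_Md k w).1 hm, Stmt7.tmap_tmul] at h0
    exact h0
  -- homogeneous surjectivity
  have hontoG : ∀ (d : ℕ), ∀ l ∈ G d, ∃ m ∈ Stmt7.Md k w d, φ m = l := by
    intro d l hl
    obtain ⟨m0, hm0⟩ := hsurj l
    have hm0mem : m0 ∈ ⨆ e : ℕ, Stmt7.Md k w e := by
      have h1 : m0 ∈ Stmt7.Psup k w 1 := by
        rw [Stmt7.Psup_one_eq_top k w hw1]; trivial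
      exact (iSup_le fun e : {e : ℕ // 1 ≤ e} =>
        le_iSup (fun e : ℕ => Stmt7.Md k w e) e.1) h1
    rw [Submodule.mem_iSup_iff_exists_dfinsupp'] at hm0mem
    obtain ⟨f, hf⟩ := hm0mem
    refine ⟨f d, (f d).2, ?_⟩
    have hkey : Stmt7.prL k G d l = φ (f d) := by
      have hφsum : φ (∑ i ∈ f.support, ((f i : FreeLieAlgebra k ↥X))) =
          ∑ i ∈ f.support, φ (f i) := by
        have h0 := map_sum (φ.toLinearMap) (fun i => ((f i : FreeLieAlgebra k ↥X))) f.support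
        simpa only [LieHom.coe_toLinearMap] using h0
      have hsum2 : ∑ x ∈ f.support, Stmt7.prL k G d (φ (f x)) =
          Stmt7.prL k G d (φ (f d)) := by
        refine Finset.sum_eq_single d (fun b _ hb => ?_) (fun hd => ?_)
        · exact Stmt7.prL_of_mem_ne k G (hφMd b _ (f b).2) hb
        · rw [DFinsupp.notMem_support_iff.1 hd]
          rw [ZeroMemClass.coe_zero, map_zero, map_zero]
      rw [← hm0, ← hf, DFinsupp.sum, hφsum, map_sum, hsum2,
        Stmt7.prL_of_mem_same k G (hφMd d _ (f d).2)]
    rw [← hkey, Stmt7.prL_of_mem_same k G hl]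
  -- homogeneous preimages of F
  choose dF hdF1 hdF2 using fun f : F => hFhom f.1 f.2
  choose sF hsF1 hsF2 using fun f : F => hontoG (dF f) f.1 (hdF2 f)
  -- the equivalence with the free Lie algebra on F
  set φF : FreeLieAlgebra k ↥F →ₗ⁅k⁆ L := FreeLieAlgebra.lift k (fun f : F => (f : L)) with hφFdef
  have hφFof : ∀ f : F, φF (FreeLieAlgebra.of k f) = (f : L) := fun f =>
    FreeLieAlgebra.lift_of_apply _ _
  have hφFsurj : Function.Surjective φF := hFfree.2
  -- section ψ
  set eF : FreeLieAlgebra k ↥F ≃ₗ⁅k⁆ L := LieEquiv.ofBijective φF hFfree with heFdef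
  have heFap : ∀ m, eF m = φF m := fun m => rfl
  set ψ : L →ₗ⁅k⁆ FreeLieAlgebra k ↥X :=
    (FreeLieAlgebra.lift k sF).comp eF.symm.toLieHom with hψdef
  have hψf : ∀ f : F, ψ (f : L) = sF f := by
    intro f
    have h1 : eF.symm (f : L) = FreeLieAlgebra.of k f := by
      have h0 : eF (FreeLieAlgebra.of k f) = (f : L) := by rw [heFap, hφFof]
      rw [← h0, LieEquiv.symm_apply_apply]
    have h2 : ψ (f : L) = FreeLieAlgebra.lift k sF (eF.symm (f : L)) := rfl
    rw [h2, h1, FreeLieAlgebra.lift_of_apply]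
  have hφψ : ∀ l, φ (ψ l) = l := by
    have := Stmt7.hom_ext_of_surj (k := k) φF hφFsurj (φ.comp ψ) (LieHom.id)
      (fun f => by rw [hφFof f, LieHom.comp_apply, hψf f, hsF2 f, LieHom.id_apply])
    intro l
    exact this l
  -- ψ is graded
  have hbetaψ : ∀ l, Stmt7.beta k w (ψ l) = Stmt7.tmap ψ (Stmt7.betaL k G hbracket l) := by
    have := Stmt7.hom_ext_of_surj (k := k) φF hφFsurj
      ((Stmt7.beta k w).comp ψ) ((Stmt7.tmap ψ).comp (Stmt7.betaL k G hbracket))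
      (fun f => by
        have e1 : ((Stmt7.beta k w).comp ψ) (φF (FreeLieAlgebra.of k f)) =
            (Polynomial.X ^ (dF f)) ⊗ₜ sF f := by
          rw [hφFof f, LieHom.comp_apply, hψf f, (Stmt7.mem_Md k w).1 (hsF1 f)]
        have e2 : ((Stmt7.tmap ψ).comp (Stmt7.betaL k G hbracket)) (φF (FreeLieAlgebra.of k f)) =
            (Polynomial.X ^ (dF f)) ⊗ₜ sF f := by
          rw [hφFof f, LieHom.comp_apply, Stmt7.betaL_of_mem k G hbracket (hdF2 f),
            Stmt7.tmap_tmul, hψf f]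
        rw [e1, e2])
    intro l
    exact this l
  have hψG : ∀ d, ∀ l ∈ G d, ψ l ∈ Stmt7.Md k w d := by
    intro d l hl
    rw [Stmt7.mem_Md k w, hbetaψ l, Stmt7.betaL_of_mem k G hbracket hl, Stmt7.tmap_tmul]
  -- θ
  set θ : FreeLieAlgebra k ↥X →ₗ⁅k⁆ FreeLieAlgebra k ↥X := ψ.comp φ with hθdef
  have hθ1 : ∀ (d : ℕ) (m : FreeLieAlgebra k ↥X), m ∈ Stmt7.Md k w d → θ m ∈ Stmt7.Md k w d :=
    fun d m hm => hψG d _ (hφMd d m hm)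
  -- abelianization comparison
  set DM : Submodule k (FreeLieAlgebra k ↥X) := Stmt7.lcs k (FreeLieAlgebra k ↥X) 1 with hDMdef
  have hbrmemDM : ∀ a b : FreeLieAlgebra k ↥X, ⁅a, b⁆ ∈ DM := fun a b =>
    Stmt7.lie_mem_lcs a Submodule.mem_top
  have hφDM : ∀ m ∈ DM, φ m ∈ D := by
    intro m hm
    rw [hDMdef, Stmt7.lcs_succ] at hm
    induction hm using Submodule.span_induction with
    | mem z hz =>
      obtain ⟨a, b, hb, rfl⟩ := hz
      rw [LieHom.map_lie, hD]
      exact Submodule.subset_span ⟨φ a, φ b, rfl⟩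
    | zero => rw [map_zero]; exact Submodule.zero_mem _
    | add a b _ _ ha hb => rw [map_add]; exact add_mem ha hb
    | smul c a _ ha => rw [map_smul]; exact Submodule.smul_mem _ c ha
  set φbar : (FreeLieAlgebra k ↥X ⧸ DM) →ₗ[k] L ⧸ D :=
    Submodule.liftQ DM (D.mkQ ∘ₗ φ.toLinearMap) (fun m hm => by
      rw [LinearMap.mem_ker, LinearMap.comp_apply, LieHom.coe_toLinearMap,
        Submodule.mkQ_apply, Submodule.Quotient.mk_eq_zero]
      exact hφDM m hm) with hφbardef
  have hφbar : ∀ m : FreeLieAlgebra k ↥X, φbar (DM.mkQ m) = D.mkQ (φ m) := fun m => rfl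
  -- basis of the abelianization of L
  have hXresp : Submodule.span k (Set.range fun x : X => D.mkQ (x : L)) = ⊤ := by
    rw [← Set.image_eq_range]; exact hXspan
  set B : Module.Basis X k (L ⧸ D) := Module.Basis.mk hXind (le_of_eq hXresp.symm) with hBdef
  have hB : ∀ x : X, B x = D.mkQ (x : L) := fun x => Module.Basis.mk_apply _ _ _
  set r : (L ⧸ D) →ₗ[k] (FreeLieAlgebra k ↥X ⧸ DM) :=
    B.constr ℕ (fun x : X => DM.mkQ (FreeLieAlgebra.of k x)) with hrdef
  -- the images of generators span the abelianization of M
  have hUtop : ∀ m : FreeLieAlgebra k ↥X,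
      m ∈ Submodule.span k (Set.range (FreeLieAlgebra.of k (X := ↥X))) ⊔ DM := by
    intro m
    let S : LieSubalgebra k (FreeLieAlgebra k ↥X) :=
      { toSubmodule := Submodule.span k (Set.range (FreeLieAlgebra.of k (X := ↥X))) ⊔ DM
        lie_mem' := fun {a b} _ _ => Submodule.mem_sup_right (hbrmemDM a b) }
    exact Stmt7.free_gen S
      (fun y => Submodule.mem_sup_left (Submodule.subset_span ⟨y, rfl⟩)) m
  have hqspanTop :
      Submodule.span k (Set.range fun x : X => DM.mkQ (FreeLieAlgebra.of k x)) = ⊤ := by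
    rw [Submodule.eq_top_iff']
    intro mq
    obtain ⟨m, rfl⟩ := DM.mkQ_surjective mq
    obtain ⟨u, hu, v, hv, rfl⟩ := Submodule.mem_sup.1 (hUtop m)
    rw [map_add]
    refine add_mem ?_ ?_
    · have h1 : DM.mkQ u ∈ Submodule.map DM.mkQ
          (Submodule.span k (Set.range (FreeLieAlgebra.of k (X := ↥X)))) :=
        Submodule.mem_map_of_mem hu
      rw [Submodule.map_span, ← Set.range_comp] at h1
      exact h1
    · have h2 : DM.mkQ v = 0 := by
        rw [Submodule.mkQ_apply, Submodule.Quotient.mk_eq_zero]; exact hv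
      rw [h2]; exact Submodule.zero_mem _
  have hrφbar : ∀ mq, r (φbar mq) = mq := by
    have hEq : Set.EqOn (r ∘ₗ φbar)
        (LinearMap.id : (FreeLieAlgebra k ↥X ⧸ DM) →ₗ[k] (FreeLieAlgebra k ↥X ⧸ DM))
        (Set.range fun x : X => DM.mkQ (FreeLieAlgebra.of k x)) := by
      rintro _ ⟨x, rfl⟩
      rw [LinearMap.comp_apply, LinearMap.id_apply, hφbar, hφof x, ← hB x,
        hrdef, Module.Basis.constr_basis]
    have := LinearMap.ext_on hqspanTop hEq
    intro mq
    exact DFunLike.congr_fun this mq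
  -- θ is the identity modulo the derived subalgebra
  have hθ2 : ∀ m : FreeLieAlgebra k ↥X, θ m - m ∈ DM := by
    set nu : FreeLieAlgebra k ↥X →ₗ[k] FreeLieAlgebra k ↥X :=
      θ.toLinearMap - LinearMap.id with hnudef
    have hnuap : ∀ m : FreeLieAlgebra k ↥X, nu m = θ m - m := by
      intro m
      rw [hnudef, LinearMap.sub_apply, LinearMap.id_apply, LieHom.coe_toLinearMap]
    have hVof : ∀ x : X, nu (FreeLieAlgebra.of k x) ∈ DM := by
      intro x
      have hθof : θ (FreeLieAlgebra.of k x) = ψ (x : L) := by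
        rw [hθdef, LieHom.comp_apply, hφof]
      have hq : DM.mkQ (ψ (x : L)) = DM.mkQ (FreeLieAlgebra.of k x) := by
        have h1 : φbar (DM.mkQ (ψ (x : L))) = D.mkQ (x : L) := by rw [hφbar, hφψ]
        have h2 : φbar (DM.mkQ (FreeLieAlgebra.of k x)) = D.mkQ (x : L) := by
          rw [hφbar, hφof]
        calc DM.mkQ (ψ (x : L)) = r (φbar (DM.mkQ (ψ (x : L)))) := (hrφbar _).symm
          _ = r (φbar (DM.mkQ (FreeLieAlgebra.of k x))) := by rw [h1, h2]
          _ = DM.mkQ (FreeLieAlgebra.of k x) := hrφbar _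
      have hsub : ψ (x : L) - FreeLieAlgebra.of k x ∈ DM := by
        have := (Submodule.Quotient.eq DM).1 hq
        exact this
      rw [hnuap, hθof]
      exact hsub
    intro m
    let V : LieSubalgebra k (FreeLieAlgebra k ↥X) :=
      { toSubmodule := Submodule.comap nu DM
        lie_mem' := fun {a b} _ _ => by
          have hmem : nu ⁅a, b⁆ ∈ DM := by
            rw [hnuap, LieHom.map_lie]
            exact sub_mem (hbrmemDM _ _) (hbrmemDM _ _)
          exact hmem }
    have hm := Stmt7.free_gen V hVof m
    have h9 : nu m ∈ DM := hm
    rwa [hnuap] at h9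
  -- injectivity
  have hθinj : Function.Injective θ := Stmt7.theta_inj k w hw1 θ hθ1 hθ2
  have hφinj : Function.Injective φ := by
    intro m1 m2 h12
    apply hθinj
    show ψ (φ m1) = ψ (φ m2)
    rw [h12]
  exact ⟨hφinj, hsurj⟩
end

section
/- Let L be the free Lie algebra on two generators x, y over a field k of characteristic 0. Set x' = x + [x,[x,y]] and y' = y + [x,[x,[x,y]]]. Then the images of x' and y' form a basis of L/[L,L], but [x,y] does not lie in the Lie subalgebra of L generated by x' and y'. -/
open FreeLieAlgebra

attribute [local instance] LieRing.ofAssociativeRing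

/-- Any Lie subalgebra of a free Lie algebra containing all generators is everything. -/
private lemma freeLie_mem_of_of {k : Type*} [CommRing k] {X : Type*}
    (W : LieSubalgebra k (FreeLieAlgebra k X))
    (h : ∀ i, FreeLieAlgebra.of k i ∈ W) (z : FreeLieAlgebra k X) : z ∈ W := by
  let F : FreeLieAlgebra k X →ₗ⁅k⁆ W :=
    FreeLieAlgebra.lift k (fun i => (⟨FreeLieAlgebra.of k i, h i⟩ : W))
  have key : W.incl.comp F = LieHom.id := by
    apply (FreeLieAlgebra.lift k).symm.injective
    funext i
    simp [FreeLieAlgebra.lift_symm_apply, F]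
  have hz : W.incl (F z) = z := DFunLike.congr_fun key z
  rw [← hz]
  exact (F z).2

/-- In the free Lie algebra `L` on two generators `x, y` over a field of
characteristic `0`, the elements `x' = x + [x,[x,y]]` and `y' = y + [x,[x,[x,y]]]`
have images forming a basis of `L/[L,L]`, yet `[x,y]` does not lie in the Lie
subalgebra generated by `x'` and `y'`. -/
theorem stmt8 (k : Type*) [Field k] [CharZero k]
    (x y : FreeLieAlgebra k (Fin 2))
    (hx : x = FreeLieAlgebra.of k 0) (hy : y = FreeLieAlgebra.of k 1)
    (x' y' : FreeLieAlgebra k (Fin 2))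
    (hx' : x' = x + ⁅x, ⁅x, y⁆⁆) (hy' : y' = y + ⁅x, ⁅x, ⁅x, y⁆⁆⁆)
    (D : Submodule k (FreeLieAlgebra k (Fin 2)))
    (hD : D = Submodule.span k
      {z : FreeLieAlgebra k (Fin 2) | ∃ a b : FreeLieAlgebra k (Fin 2), ⁅a, b⁆ = z}) :
    (LinearIndependent k ![D.mkQ x', D.mkQ y'] ∧
      Submodule.span k {D.mkQ x', D.mkQ y'} = ⊤) ∧
    ⁅x, y⁆ ∉ LieSubalgebra.lieSpan k (FreeLieAlgebra k (Fin 2)) {x', y'} := by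
  -- characters to `k` (an abelian Lie algebra)
  have lie_k : ∀ a b : k, ⁅a, b⁆ = 0 := fun a b => by
    rw [Ring.lie_def, mul_comm, sub_self]
  set g₀ : FreeLieAlgebra k (Fin 2) →ₗ⁅k⁆ k := FreeLieAlgebra.lift k ![1, 0] with hg₀
  set g₁ : FreeLieAlgebra k (Fin 2) →ₗ⁅k⁆ k := FreeLieAlgebra.lift k ![0, 1] with hg₁
  have hDg : ∀ (g : FreeLieAlgebra k (Fin 2) →ₗ⁅k⁆ k), ∀ z ∈ D, g z = 0 := by
    intro g z hz
    rw [hD] at hz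
    refine Submodule.span_induction (p := fun z _ => g z = 0) ?_ ?_ ?_ ?_ hz
    · rintro w ⟨a, b, rfl⟩
      rw [LieHom.map_lie, lie_k]
    · exact g.map_zero
    · intro a b _ _ ha hb; rw [map_add g, ha, hb, add_zero]
    · intro c a _ ha; rw [map_smul g, ha, smul_zero]
  have hg₀x' : g₀ x' = 1 := by
    rw [hx', map_add g₀, LieHom.map_lie, lie_k, add_zero, hx, hg₀, lift_of_apply]
    simp
  have hg₀y' : g₀ y' = 0 := by
    rw [hy', map_add g₀, LieHom.map_lie, lie_k, add_zero, hy, hg₀, lift_of_apply]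
    simp
  have hg₁y' : g₁ y' = 1 := by
    rw [hy', map_add g₁, LieHom.map_lie, lie_k, add_zero, hy, hg₁, lift_of_apply]
    simp
  refine ⟨⟨?_, ?_⟩, ?_⟩
  · -- linear independence
    rw [show (![D.mkQ x', D.mkQ y'] : Fin 2 → _) = ![D.mkQ x', D.mkQ y'] from rfl,
      linearIndependent_fin2]
    constructor
    · intro h0
      have : ((![D.mkQ x', D.mkQ y'] : Fin 2 → _) 1) = D.mkQ y' := rfl
      rw [this] at h0
      have hy'D : y' ∈ D := (Submodule.Quotient.mk_eq_zero D).mp h0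
      have := hDg g₁ y' hy'D
      rw [hg₁y'] at this
      exact one_ne_zero this
    · intro a ha
      have h1 : ((![D.mkQ x', D.mkQ y'] : Fin 2 → _) 1) = D.mkQ y' := rfl
      have h0 : ((![D.mkQ x', D.mkQ y'] : Fin 2 → _) 0) = D.mkQ x' := rfl
      rw [h1, h0] at ha
      have : D.mkQ (a • y' - x') = 0 := by
        rw [map_sub, map_smul, ha, sub_self]
      have hmem : a • y' - x' ∈ D := (Submodule.Quotient.mk_eq_zero D).mp this
      have := hDg g₀ _ hmem
      rw [map_sub g₀, map_smul g₀, hg₀x', hg₀y', smul_zero, zero_sub] at this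
      exact one_ne_zero (neg_eq_zero.mp this)
  · -- spanning
    have hbr : ∀ a b : FreeLieAlgebra k (Fin 2), ⁅a, b⁆ ∈ D := by
      intro a b
      rw [hD]
      exact Submodule.subset_span ⟨a, b, rfl⟩
    set W : Submodule k (FreeLieAlgebra k (Fin 2)) := Submodule.span k {x', y'} ⊔ D with hW
    have hWD : D ≤ W := le_sup_right
    have hW' : ∀ z : FreeLieAlgebra k (Fin 2), z ∈ W := by
      have hWlie : ∀ {a b : FreeLieAlgebra k (Fin 2)}, a ∈ W → b ∈ W → ⁅a, b⁆ ∈ W :=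
        fun {a b} _ _ => hWD (hbr a b)
      let W' : LieSubalgebra k (FreeLieAlgebra k (Fin 2)) := { W with lie_mem' := hWlie }
      have hx'W : x' ∈ W :=
        le_sup_left (α := Submodule k (FreeLieAlgebra k (Fin 2)))
          (Submodule.subset_span (by simp))
      have hy'W : y' ∈ W :=
        le_sup_left (α := Submodule k (FreeLieAlgebra k (Fin 2)))
          (Submodule.subset_span (by simp))
      have hxW : x ∈ W := by
        have : x = x' - ⁅x, ⁅x, y⁆⁆ := by rw [hx']; abel
        rw [this]
        exact sub_mem hx'W (hWD (hbr _ _))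
      have hyW : y ∈ W := by
        have : y = y' - ⁅x, ⁅x, ⁅x, y⁆⁆⁆ := by rw [hy']; abel
        rw [this]
        exact sub_mem hy'W (hWD (hbr _ _))
      intro z
      refine freeLie_mem_of_of W' ?_ z
      intro i
      fin_cases i
      · show FreeLieAlgebra.of k 0 ∈ W
        rw [← hx]; exact hxW
      · show FreeLieAlgebra.of k 1 ∈ W
        rw [← hy]; exact hyW
    rw [eq_top_iff]
    rintro w -
    obtain ⟨z, rfl⟩ := Submodule.Quotient.mk_surjective D w
    have hz := hW' z
    rw [hW, Submodule.mem_sup] at hz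
    obtain ⟨p, hp, d, hd, rfl⟩ := hz
    have hd0 : D.mkQ d = 0 := (Submodule.Quotient.mk_eq_zero D).mpr hd
    have : (Submodule.Quotient.mk (p := D) (p + d)) = D.mkQ p := by
      show D.mkQ (p + d) = D.mkQ p
      rw [map_add, hd0, add_zero]
    rw [this]
    have : D.mkQ p ∈ Submodule.map D.mkQ (Submodule.span k {x', y'}) :=
      Submodule.mem_map_of_mem hp
    rw [Submodule.map_span, Set.image_insert_eq, Set.image_singleton] at this
    exact this
  · -- non-membership
    set A : Matrix (Fin 2) (Fin 2) k := !![1, 0; 0, 0] with hA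
    set B : Matrix (Fin 2) (Fin 2) k := !![2, 1; 0, 0] with hB
    set A' : Matrix (Fin 2) (Fin 2) k := !![1, 1; 0, 0] with hA'
    have hAB : ⁅A, B⁆ = !![0, 1; 0, 0] := by
      ext i j
      fin_cases i <;> fin_cases j <;>
        simp [Ring.lie_def, hA, hB, Matrix.mul_apply, Fin.sum_univ_two]
    have hAE : ⁅A, (!![0, 1; 0, 0] : Matrix (Fin 2) (Fin 2) k)⁆ = !![0, 1; 0, 0] := by
      ext i j
      fin_cases i <;> fin_cases j <;>
        simp [Ring.lie_def, hA, Matrix.mul_apply, Fin.sum_univ_two]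
    -- the target Lie subalgebra: the line spanned by A'
    have hTlie : ∀ {a b : Matrix (Fin 2) (Fin 2) k},
        a ∈ (Submodule.span k {A'}) → b ∈ (Submodule.span k {A'}) →
        ⁅a, b⁆ ∈ (Submodule.span k {A'}) := by
      intro a b ha hb
      rw [Submodule.mem_span_singleton] at ha hb ⊢
      obtain ⟨c, rfl⟩ := ha
      obtain ⟨d, rfl⟩ := hb
      exact ⟨0, by simp⟩
    let T : LieSubalgebra k (Matrix (Fin 2) (Fin 2) k) :=
      { Submodule.span k {A'} with lie_mem' := hTlie }
    set φ : FreeLieAlgebra k (Fin 2) →ₗ⁅k⁆ Matrix (Fin 2) (Fin 2) k :=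
      FreeLieAlgebra.lift k ![A, B] with hφ
    have hφx : φ x = A := by rw [hx, hφ, lift_of_apply]; rfl
    have hφy : φ y = B := by rw [hy, hφ, lift_of_apply]; rfl
    have hφx' : φ x' = A + !![0, 1; 0, 0] := by
      rw [hx', map_add φ, LieHom.map_lie, LieHom.map_lie, hφx, hφy, hAB, hAE]
    have hφy' : φ y' = B + !![0, 1; 0, 0] := by
      rw [hy', map_add φ, LieHom.map_lie, LieHom.map_lie, LieHom.map_lie, hφx, hφy,
        hAB, hAE, hAE]
    have hA'eq : A + !![0, 1; 0, 0] = A' := by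
      rw [hA, hA']
      ext i j
      fin_cases i <;> fin_cases j <;> simp
    have hB'eq : B + !![0, 1; 0, 0] = (2 : k) • A' := by
      rw [hB, hA']
      ext i j
      fin_cases i <;> fin_cases j <;> norm_num
    intro hmem
    rw [LieSubalgebra.mem_lieSpan] at hmem
    have hsub : {x', y'} ⊆ (T.comap φ : Set (FreeLieAlgebra k (Fin 2))) := by
      rintro z hz
      rcases hz with rfl | rfl
      · show φ z ∈ T
        rw [hφx', hA'eq]
        exact Submodule.mem_span_singleton_self A'
      · show φ z ∈ T
        rw [hφy', hB'eq]
        exact Submodule.smul_mem _ _ (Submodule.mem_span_singleton_self A')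
    have h2 : φ ⁅x, y⁆ ∈ T := hmem (T.comap φ) hsub
    rw [LieHom.map_lie, hφx, hφy, hAB] at h2
    have h3 : (!![0, 1; 0, 0] : Matrix (Fin 2) (Fin 2) k) ∈ Submodule.span k {A'} := h2
    rw [Submodule.mem_span_singleton] at h3
    obtain ⟨c, hc⟩ := h3
    have e00 : (c • A') 0 0 = (0 : k) := by rw [hc]; simp
    have e01 : (c • A') 0 1 = (1 : k) := by rw [hc]; simp
    rw [hA'] at e00 e01
    simp at e00 e01
    rw [e00] at e01
    exact one_ne_zero e01.symm
end

section
/- Let L be the free Lie algebra on two generators x, y over a field of characteristic 0, graded with x, y in degree 1. Any nonzero element of the Lie subalgebra generated by x' = x + [x,[x,y]] and y' = y + [x,[x,[x,y]]] has a nonzero homogeneous component in some degree ≥ 3, or is a linear combination of x' and y'. -/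
attribute [local instance 100] LieRing.ofAssociativeRing

private def Pz : Matrix (Fin 5) (Fin 5) ℤ :=
  !![0,0,0,0,0; 0,1,0,0,0; 0,0,2,0,0; 0,0,0,0,-1; 0,0,0,1,1]
private def Qz : Matrix (Fin 5) (Fin 5) ℤ :=
  !![0,3,0,0,0; 0,0,0,3,0; 0,0,0,0,0; -3,0,0,0,0; -1,0,0,0,0]
private def Xz : Matrix (Fin 5) (Fin 5) ℤ :=
  Pz + (Pz*(Pz*Qz - Qz*Pz) - (Pz*Qz - Qz*Pz)*Pz)

private def fm (k : Type*) [Field k] : Matrix (Fin 5) (Fin 5) ℤ →+* Matrix (Fin 5) (Fin 5) k :=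
  (Int.castRingHom k).mapMatrix

private lemma hYk (k : Type*) [Field k] :
    fm k Qz + (fm k Pz*(fm k Pz*(fm k Pz*fm k Qz - fm k Qz*fm k Pz)
      - (fm k Pz*fm k Qz - fm k Qz*fm k Pz)*fm k Pz)
      - (fm k Pz*(fm k Pz*fm k Qz - fm k Qz*fm k Pz)
      - (fm k Pz*fm k Qz - fm k Qz*fm k Pz)*fm k Pz)*fm k Pz) = 0 := by
  have h : Qz + (Pz*(Pz*(Pz*Qz - Qz*Pz) - (Pz*Qz - Qz*Pz)*Pz)
      - (Pz*(Pz*Qz - Qz*Pz) - (Pz*Qz - Qz*Pz)*Pz)*Pz) = 0 := by decide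
  calc fm k Qz + (fm k Pz*(fm k Pz*(fm k Pz*fm k Qz - fm k Qz*fm k Pz)
      - (fm k Pz*fm k Qz - fm k Qz*fm k Pz)*fm k Pz)
      - (fm k Pz*(fm k Pz*fm k Qz - fm k Qz*fm k Pz)
      - (fm k Pz*fm k Qz - fm k Qz*fm k Pz)*fm k Pz)*fm k Pz)
      = fm k (Qz + (Pz*(Pz*(Pz*Qz - Qz*Pz) - (Pz*Qz - Qz*Pz)*Pz)
      - (Pz*(Pz*Qz - Qz*Pz) - (Pz*Qz - Qz*Pz)*Pz)*Pz)) := by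
        simp only [map_add, map_sub, map_mul]
    _ = fm k 0 := by rw [h]
    _ = 0 := map_zero _

private lemma hXk (k : Type*) [Field k] :
    fm k Pz + (fm k Pz*(fm k Pz*fm k Qz - fm k Qz*fm k Pz)
      - (fm k Pz*fm k Qz - fm k Qz*fm k Pz)*fm k Pz) = fm k Xz := by
  simp only [Xz, map_add, map_sub, map_mul]

private def spanLie (k : Type*) [Field k] {B : Type*} [Ring B] [Algebra k B] (X : B) :
    LieSubalgebra k B :=
  { Submodule.span k {X} with
    lie_mem' := by
      intro a b ha hb
      obtain ⟨r, rfl⟩ := Submodule.mem_span_singleton.mp ha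
      obtain ⟨s, rfl⟩ := Submodule.mem_span_singleton.mp hb
      show ⁅r • X, s • X⁆ ∈ Submodule.span k {X}
      have hz : ⁅r • X, s • X⁆ = (0 : B) := by
        rw [Ring.lie_def]
        rw [smul_mul_smul_comm, smul_mul_smul_comm]
        rw [mul_comm s r]
        exact sub_self _
      rw [hz]
      exact Submodule.zero_mem _ }

/-- Work in the free Lie algebra on two generators `x, y`, realized as
the Lie elements of the free associative algebra `k⟨x,y⟩` graded by total degree
(`M ^ d` is the degree-`d` component, `M` the span of the generators).  Any nonzero
element of the Lie subalgebra generated by `x' = x + [x,[x,y]]` and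
`y' = y + [x,[x,[x,y]]]` either has a nonzero homogeneous component in some degree
`≥ 3` (i.e. does not lie in `M⁰ ⊔ M¹ ⊔ M²`), or is a linear combination of `x'` and
`y'`. -/
theorem stmt9 (k : Type*) [Field k] [CharZero k]
    (M : Submodule k (FreeAlgebra k (Fin 2)))
    (hM : M = Submodule.span k (Set.range (FreeAlgebra.ι k (X := Fin 2))))
    (x y : FreeAlgebra k (Fin 2))
    (hx : x = FreeAlgebra.ι k (0 : Fin 2)) (hy : y = FreeAlgebra.ι k (1 : Fin 2))
    (x' y' : FreeAlgebra k (Fin 2))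
    (hx' : x' = x + ⁅x, ⁅x, y⁆⁆) (hy' : y' = y + ⁅x, ⁅x, ⁅x, y⁆⁆⁆) :
    ∀ a ∈ LieSubalgebra.lieSpan k (FreeAlgebra k (Fin 2)) {x', y'}, a ≠ 0 →
      a ∉ (M ^ 0 ⊔ M ^ 1 ⊔ M ^ 2) ∨ ∃ c₁ c₂ : k, a = c₁ • x' + c₂ • y' := by
  intro a ha hane
  left
  intro haD
  apply hane
  obtain ⟨Φ, hΦx, hΦy⟩ : ∃ Φ : FreeAlgebra k (Fin 2) →ₐ[k] Matrix (Fin 5) (Fin 5) k,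
      Φ x = fm k Pz ∧ Φ y = fm k Qz :=
    ⟨FreeAlgebra.lift k ![fm k Pz, fm k Qz], by rw [hx]; simp, by rw [hy]; simp⟩
  have hΦx' : Φ x' = fm k Xz := by
    rw [hx']
    simp only [Ring.lie_def, map_add, map_sub, map_mul, hΦx, hΦy]
    exact hXk k
  have hΦy' : Φ y' = 0 := by
    rw [hy']
    simp only [Ring.lie_def, map_add, map_sub, map_mul, hΦx, hΦy]
    exact hYk k
  -- the Lie span maps into the span of `fm k Xz`
  have hle : LieSubalgebra.lieSpan k (FreeAlgebra k (Fin 2)) {x', y'} ≤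
      (spanLie k (fm k Xz)).comap Φ.toLieHom := by
    rw [LieSubalgebra.lieSpan_le]
    intro z hz
    simp only [Set.mem_insert_iff, Set.mem_singleton_iff] at hz
    rcases hz with rfl | rfl
    · show Φ z ∈ spanLie k (fm k Xz)
      show Φ z ∈ Submodule.span k {fm k Xz}
      rw [hΦx']
      exact Submodule.mem_span_singleton_self _
    · show Φ z ∈ spanLie k (fm k Xz)
      show Φ z ∈ Submodule.span k {fm k Xz}
      rw [hΦy']
      exact Submodule.zero_mem _
  have haX : Φ a ∈ Submodule.span k {fm k Xz} := hle ha
  obtain ⟨d, hdX⟩ := Submodule.mem_span_singleton.mp haX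
  -- the quadratic part
  have hME : M = Submodule.span k {x, y} := by
    rw [hM]
    congr 1
    ext z
    constructor
    · rintro ⟨i, rfl⟩
      fin_cases i <;> simp [hx, hy]
    · rintro (rfl | rfl)
      exacts [⟨0, hx.symm⟩, ⟨1, hy.symm⟩]
  have hsub : M ^ 0 ⊔ M ^ 1 ⊔ M ^ 2 ≤
      Submodule.span k (Set.range (![1, x, y, x*x, x*y, y*x, y*y] :
        Fin 7 → FreeAlgebra k (Fin 2))) := by
    refine sup_le (sup_le ?_ ?_) ?_
    · rw [pow_zero, Submodule.one_eq_span]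
      refine Submodule.span_le.mpr ?_
      rintro z rfl
      exact Submodule.subset_span ⟨0, rfl⟩
    · rw [pow_one, hME]
      refine Submodule.span_le.mpr ?_
      rintro z (rfl | rfl)
      · exact Submodule.subset_span ⟨1, rfl⟩
      · exact Submodule.subset_span ⟨2, rfl⟩
    · rw [pow_two, hME, Submodule.span_mul_span]
      refine Submodule.span_le.mpr (Set.mul_subset_iff.mpr ?_)
      rintro p (rfl | rfl) q (rfl | rfl)
      · exact Submodule.subset_span ⟨3, rfl⟩
      · exact Submodule.subset_span ⟨4, rfl⟩
      · exact Submodule.subset_span ⟨5, rfl⟩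
      · exact Submodule.subset_span ⟨6, rfl⟩
  obtain ⟨c, hc⟩ := (Submodule.mem_span_range_iff_exists_fun k).mp (hsub haD)
  -- apply Φ to the representation of `a`
  have h2 : Φ (∑ i : Fin 7, c i • (![1, x, y, x*x, x*y, y*x, y*y] :
      Fin 7 → FreeAlgebra k (Fin 2)) i) = Φ a := congrArg Φ hc
  rw [map_sum] at h2
  have v5 : (![1, x, y, x*x, x*y, y*x, y*y] : Fin 7 → FreeAlgebra k (Fin 2)) 5 = y*x := rfl
  have v6 : (![1, x, y, x*x, x*y, y*x, y*y] : Fin 7 → FreeAlgebra k (Fin 2)) 6 = y*y := rfl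
  simp only [Fin.sum_univ_seven, Matrix.cons_val_zero, Matrix.cons_val_one, Matrix.head_cons,
    Matrix.cons_val_two, Matrix.cons_val_three, Matrix.cons_val_four, Matrix.tail_cons, v5, v6,
    map_smul, map_mul, map_one, hΦx, hΦy] at h2
  have hmat : c 0 • fm k (1 : Matrix (Fin 5) (Fin 5) ℤ) + c 1 • fm k Pz + c 2 • fm k Qz
      + c 3 • fm k (Pz*Pz) + c 4 • fm k (Pz*Qz) + c 5 • fm k (Qz*Pz) + c 6 • fm k (Qz*Qz)
      = d • fm k Xz := by
    rw [map_one, map_mul, map_mul, map_mul, map_mul]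
    rw [hdX]
    exact h2
  have hfap : ∀ (N : Matrix (Fin 5) (Fin 5) ℤ) (i j : Fin 5),
      (fm k N) i j = ((N i j : ℤ) : k) := fun _ _ _ => rfl
  -- extract entry equations
  have E1 := by
    have h := congrFun (congrFun hmat 0) 0
    simp only [Matrix.add_apply, Matrix.smul_apply, hfap, smul_eq_mul] at h
    rw [show (1 : Matrix (Fin 5) (Fin 5) ℤ) 0 0 = 1 from by decide, show Pz 0 0 = 0 from by decide, show Qz 0 0 = 0 from by decide, show (Pz*Pz) 0 0 = 0 from by decide, show (Pz*Qz) 0 0 = 0 from by decide, show (Qz*Pz) 0 0 = 0 from by decide, show (Qz*Qz) 0 0 = 0 from by decide, show Xz 0 0 = 0 from by decide] at h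
    push_cast at h
    exact h
  have Ea := by
    have h := congrFun (congrFun hmat 0) 1
    simp only [Matrix.add_apply, Matrix.smul_apply, hfap, smul_eq_mul] at h
    rw [show (1 : Matrix (Fin 5) (Fin 5) ℤ) 0 1 = 0 from by decide, show Pz 0 1 = 0 from by decide, show Qz 0 1 = 3 from by decide, show (Pz*Pz) 0 1 = 0 from by decide, show (Pz*Qz) 0 1 = 0 from by decide, show (Qz*Pz) 0 1 = 3 from by decide, show (Qz*Qz) 0 1 = 0 from by decide, show Xz 0 1 = 3 from by decide] at h
    push_cast at h
    exact h
  have E3 := by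
    have h := congrFun (congrFun hmat 0) 3
    simp only [Matrix.add_apply, Matrix.smul_apply, hfap, smul_eq_mul] at h
    rw [show (1 : Matrix (Fin 5) (Fin 5) ℤ) 0 3 = 0 from by decide, show Pz 0 3 = 0 from by decide, show Qz 0 3 = 0 from by decide, show (Pz*Pz) 0 3 = 0 from by decide, show (Pz*Qz) 0 3 = 0 from by decide, show (Qz*Pz) 0 3 = 0 from by decide, show (Qz*Qz) 0 3 = 9 from by decide, show Xz 0 3 = 0 from by decide] at h
    push_cast at h
    exact h
  have E4 := by
    have h := congrFun (congrFun hmat 1) 1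
    simp only [Matrix.add_apply, Matrix.smul_apply, hfap, smul_eq_mul] at h
    rw [show (1 : Matrix (Fin 5) (Fin 5) ℤ) 1 1 = 1 from by decide, show Pz 1 1 = 1 from by decide, show Qz 1 1 = 0 from by decide, show (Pz*Pz) 1 1 = 1 from by decide, show (Pz*Qz) 1 1 = 0 from by decide, show (Qz*Pz) 1 1 = 0 from by decide, show (Qz*Qz) 1 1 = 0 from by decide, show Xz 1 1 = 1 from by decide] at h
    push_cast at h
    exact h
  have Eb := by
    have h := congrFun (congrFun hmat 1) 3
    simp only [Matrix.add_apply, Matrix.smul_apply, hfap, smul_eq_mul] at h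
    rw [show (1 : Matrix (Fin 5) (Fin 5) ℤ) 1 3 = 0 from by decide, show Pz 1 3 = 0 from by decide, show Qz 1 3 = 3 from by decide, show (Pz*Pz) 1 3 = 0 from by decide, show (Pz*Qz) 1 3 = 3 from by decide, show (Qz*Pz) 1 3 = 0 from by decide, show (Qz*Qz) 1 3 = 0 from by decide, show Xz 1 3 = 0 from by decide] at h
    push_cast at h
    exact h
  have Ec := by
    have h := congrFun (congrFun hmat 1) 4
    simp only [Matrix.add_apply, Matrix.smul_apply, hfap, smul_eq_mul] at h
    rw [show (1 : Matrix (Fin 5) (Fin 5) ℤ) 1 4 = 0 from by decide, show Pz 1 4 = 0 from by decide, show Qz 1 4 = 0 from by decide, show (Pz*Pz) 1 4 = 0 from by decide, show (Pz*Qz) 1 4 = 0 from by decide, show (Qz*Pz) 1 4 = -3 from by decide, show (Qz*Qz) 1 4 = 0 from by decide, show Xz 1 4 = 3 from by decide] at h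
    push_cast at h
    exact h
  have E7 := by
    have h := congrFun (congrFun hmat 2) 2
    simp only [Matrix.add_apply, Matrix.smul_apply, hfap, smul_eq_mul] at h
    rw [show (1 : Matrix (Fin 5) (Fin 5) ℤ) 2 2 = 1 from by decide, show Pz 2 2 = 2 from by decide, show Qz 2 2 = 0 from by decide, show (Pz*Pz) 2 2 = 4 from by decide, show (Pz*Qz) 2 2 = 0 from by decide, show (Qz*Pz) 2 2 = 0 from by decide, show (Qz*Qz) 2 2 = 0 from by decide, show Xz 2 2 = 2 from by decide] at h
    push_cast at h
    exact h
  have Ed := by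
    have h := congrFun (congrFun hmat 3) 0
    simp only [Matrix.add_apply, Matrix.smul_apply, hfap, smul_eq_mul] at h
    rw [show (1 : Matrix (Fin 5) (Fin 5) ℤ) 3 0 = 0 from by decide, show Pz 3 0 = 0 from by decide, show Qz 3 0 = -3 from by decide, show (Pz*Pz) 3 0 = 0 from by decide, show (Pz*Qz) 3 0 = 1 from by decide, show (Qz*Pz) 3 0 = 0 from by decide, show (Qz*Qz) 3 0 = 0 from by decide, show Xz 3 0 = 4 from by decide] at h
    push_cast at h
    exact h
  -- linear algebra over `k`
  have hc0 : c 0 = 0 := by linear_combination E1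
  have hc6 : c 6 = 0 := by
    have h9 : (9 : k) * c 6 = 0 := by linear_combination E3
    exact (mul_eq_zero.mp h9).resolve_left (by norm_num)
  have hd0 : d = 0 := by
    have h36 : (36 : k) * d = 0 := by linear_combination (-4)*Ea + Eb + (-4)*Ec + (-3)*Ed
    exact (mul_eq_zero.mp h36).resolve_left (by norm_num)
  have hc5 : c 5 = 0 := by
    have h3 : (3 : k) * c 5 = 0 := by linear_combination (-1)*Ec + (-3)*hd0
    exact (mul_eq_zero.mp h3).resolve_left (by norm_num)
  have hc2 : c 2 = 0 := by
    have h12 : (12 : k) * c 2 = 0 := by linear_combination (-3)*Ed + Eb + (-12)*hd0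
    exact (mul_eq_zero.mp h12).resolve_left (by norm_num)
  have hc4 : c 4 = 0 := by
    have h3 : (3 : k) * c 4 = 0 := by linear_combination Eb - 3*hc2
    exact (mul_eq_zero.mp h3).resolve_left (by norm_num)
  have hc3 : c 3 = 0 := by
    have h2' : (2 : k) * c 3 = 0 := by linear_combination E7 - 2*E4 + hc0
    exact (mul_eq_zero.mp h2').resolve_left (by norm_num)
  have hc1 : c 1 = 0 := by linear_combination E4 - hc0 - hc3 + hd0
  rw [← hc, Fin.sum_univ_seven]
  rw [hc0, hc1, hc2, hc3, hc4, hc5, hc6]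
  simp
end
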